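/- Suppose the dataset (H, Ẋ, Λ) with n ≥ n_h satisfies HΛH⊤ ≻ 0 and is generated by a true system Δ_r. Let HΛ^{1/2} = U S V⊤ be a singular value decomposition (U ∈ ℝ^{n_h×n_h} and V ∈ ℝ^{n×n} orthogonal, S ∈ ℝ^{n_h×n}), and define H_s := (n_h/tr(Λ))^{1/2} U (S S⊤)^{1/2} ∈ ℝ^{n_h×n_h} and Ẋ_s := (n_h/tr(Λ))^{1/2} Ẋ Λ^{1/2} V [I_{n_h} 0]⊤ ∈ ℝ^{n_x×n_h}. Then C(H, Ẋ, Λ) ⊆ C(H_s, Ẋ_s, (tr(Λ)/n_h) I_{n_h}), where the latter is the set of admissible systems for the dataset (H_s, Ẋ_s, (tr(Λ)/n_h) I_{n_h}) with the same disturbance bound δ. -/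

import Mathlib

open Matrix

def admisSet (n_x n_h : ℕ) {k : Type*} [Fintype k] (δ : ℝ)
    (H : Matrix (Fin n_h) k ℝ) (Xd : Matrix (Fin n_x) k ℝ) (Λ : Matrix k k ℝ) :
    Set (Matrix (Fin n_x) (Fin n_h) ℝ) :=
  {Δ | (-(Δ * (H * Λ * Hᵀ) * Δᵀ + Δ * (-(H * Λ * Xdᵀ)) + (-(H * Λ * Xdᵀ))ᵀ * Δᵀ +
      (Xd * Λ * Xdᵀ - (Matrix.trace Λ * δ) • 1))).PosSemidef}

theorem admisSet_mono {n_x n_h : ℕ} {k k' : Type*} [Fintype k] [Fintype k'] {δ : ℝ}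
    {H : Matrix (Fin n_h) k ℝ} {Xd : Matrix (Fin n_x) k ℝ} {Λ : Matrix k k ℝ}
    {H' : Matrix (Fin n_h) k' ℝ} {Xd' : Matrix (Fin n_x) k' ℝ} {Λ' : Matrix k' k' ℝ}
    (hE : H' * Λ' * H'ᵀ = H * Λ * Hᵀ)
    (hF : H' * Λ' * Xd'ᵀ = H * Λ * Xdᵀ)
    (htr : Matrix.trace Λ' = Matrix.trace Λ)
    (hG : (Xd * Λ * Xdᵀ - Xd' * Λ' * Xd'ᵀ).PosSemidef) :
    admisSet n_x n_h δ H Xd Λ ⊆ admisSet n_x n_h δ H' Xd' Λ' := by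
  intro Δ hΔ
  simp only [admisSet, Set.mem_setOf_eq] at hΔ ⊢
  rw [hE, hF, htr]
  have h2 := hΔ.add hG
  convert h2 using 1
  abel

theorem stmt0 (n_x n_u n : ℕ) (hx : 0 < n_x) (hu : 0 < n_u)
    (hn : n_x + n_u ≤ n) (δ : ℝ) (hδ : 0 < δ)
    (H : Matrix (Fin (n_x + n_u)) (Fin n) ℝ) (Xd : Matrix (Fin n_x) (Fin n) ℝ)
    (l : Fin n → ℝ) (hl : ∀ i, 0 ≤ l i)
    (hpd : (H * Matrix.diagonal l * Hᵀ).PosDef)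
    (Δr : Matrix (Fin n_x) (Fin (n_x + n_u)) ℝ) (W : Matrix (Fin n_x) (Fin n) ℝ)
    (hgen : Xd = Δr * H + W) (hW : ∀ j, (∑ i, (W i j) ^ 2) < δ)
    (U : Matrix (Fin (n_x + n_u)) (Fin (n_x + n_u)) ℝ)
    (hU : Uᵀ * U = 1) (hU' : U * Uᵀ = 1)
    (V : Matrix (Fin n) (Fin n) ℝ) (hV : Vᵀ * V = 1) (hV' : V * Vᵀ = 1)
    (σ : Fin (n_x + n_u) → ℝ) (hσ : ∀ i, 0 ≤ σ i)
    (S : Matrix (Fin (n_x + n_u)) (Fin n) ℝ)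
    (hS : S = Matrix.of fun (i : Fin (n_x + n_u)) (j : Fin n) =>
      if (j : ℕ) = (i : ℕ) then σ i else 0)
    (hSVD : H * Matrix.diagonal (fun i => Real.sqrt (l i)) = U * S * Vᵀ)
    (Ssq : Matrix (Fin (n_x + n_u)) (Fin (n_x + n_u)) ℝ)
    (hSsqPSD : Ssq.PosSemidef) (hSsq : Ssq * Ssq = S * Sᵀ) :
    admisSet n_x (n_x + n_u) δ H Xd (Matrix.diagonal l) ⊆
      admisSet n_x (n_x + n_u) δ
        (Real.sqrt (((n_x + n_u : ℕ) : ℝ) / Matrix.trace (Matrix.diagonal l)) • (U * Ssq))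
        (Real.sqrt (((n_x + n_u : ℕ) : ℝ) / Matrix.trace (Matrix.diagonal l)) •
          (Xd * Matrix.diagonal (fun i => Real.sqrt (l i)) * V *
            Matrix.of fun (i : Fin n) (j : Fin (n_x + n_u)) =>
              if (i : ℕ) = (j : ℕ) then (1 : ℝ) else 0))
        ((Matrix.trace (Matrix.diagonal l) / ((n_x + n_u : ℕ) : ℝ)) • 1) := by
  have hc : (0 : ℝ) < ((n_x + n_u : ℕ) : ℝ) := by
    have : 0 < n_x + n_u := Nat.add_pos_left hx n_u
    exact_mod_cast this
  set A : Matrix (Fin n) (Fin n) ℝ := Matrix.diagonal (fun i => Real.sqrt (l i)) with hAdef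
  set P : Matrix (Fin n) (Fin (n_x + n_u)) ℝ :=
    Matrix.of fun (i : Fin n) (j : Fin (n_x + n_u)) =>
      if (i : ℕ) = (j : ℕ) then (1 : ℝ) else 0 with hPdef
  set t : ℝ := Matrix.trace (Matrix.diagonal l) with htdef
  set c : ℝ := ((n_x + n_u : ℕ) : ℝ) with hcdef
  set s : ℝ := Real.sqrt (c / t) with hsdef
  -- positivity of the trace
  have ht : 0 < t := by
    rw [htdef, Matrix.trace_diagonal]
    rcases (Finset.sum_nonneg (fun i _ => hl i)).lt_or_eq with h | h
    · exact h
    · exfalso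
      have hz : ∀ i, l i = 0 := fun i =>
        (Finset.sum_eq_zero_iff_of_nonneg (fun i _ => hl i)).mp h.symm i (Finset.mem_univ i)
      have hl0 : Matrix.diagonal l = 0 := by
        ext i j; by_cases hij : i = j <;> simp [Matrix.diagonal_apply, hij, hz]
      rw [hl0, Matrix.mul_zero, Matrix.zero_mul] at hpd
      have hne : (fun _ : Fin (n_x + n_u) => (1 : ℝ)) ≠ 0 := by
        intro hcon
        have := congrFun hcon ⟨0, Nat.add_pos_left hx n_u⟩
        simp at this
      have := hpd.dotProduct_mulVec_pos hne
      simp at this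
  -- scalar identity
  have hss : s * s = c / t := Real.mul_self_sqrt (div_nonneg hc.le ht.le)
  have hscal : s * s * (t / c) = 1 := by
    rw [hss]; field_simp
  have collapse : ∀ {p q : Type} [Fintype p] [Fintype q] (X : Matrix p (Fin (n_x + n_u)) ℝ)
      (Y : Matrix (Fin (n_x + n_u)) q ℝ),
      (s • X) * ((t / c) • (1 : Matrix (Fin (n_x + n_u)) (Fin (n_x + n_u)) ℝ)) * (s • Y)
        = X * Y := by
    intro p q _ _ X Y
    simp only [Matrix.smul_mul, Matrix.mul_smul, Matrix.mul_one, smul_smul]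
    rw [show s * (t / c * s) = 1 from by rw [← hscal]; ring, one_smul]
  -- Ssq is the diagonal of singular values
  have hSS : S * Sᵀ = Matrix.diagonal (fun i => σ i * σ i) := by
    subst hS
    ext i k
    simp only [Matrix.mul_apply, Matrix.transpose_apply, Matrix.of_apply]
    rw [Finset.sum_eq_single (Fin.castLE hn i)]
    · by_cases hik : i = k
      · subst hik
        simp [Fin.castLE]
      · have h2 : (i : ℕ) ≠ (k : ℕ) := fun h => hik (Fin.ext h)
        rw [Matrix.diagonal_apply_ne _ hik]
        simp [Fin.coe_castLE, h2]
    · intro b _ hb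
      have : (b : ℕ) ≠ (i : ℕ) := by
        intro h; exact hb (Fin.ext (by simpa using h))
      simp [this]
    · simp
  have hSsqEq : Ssq = Matrix.diagonal σ := by
    open scoped MatrixOrder Matrix.Norms.L2Operator in
    refine (CFC.sq_eq_sq_iff (A := Matrix (Fin (n_x + n_u)) (Fin (n_x + n_u)) ℝ) Ssq (Matrix.diagonal σ)
      hSsqPSD.nonneg (Matrix.posSemidef_diagonal_iff.mpr hσ).nonneg).mp ?_
    rw [pow_two, pow_two, hSsq, hSS, Matrix.diagonal_mul_diagonal]
  -- S = diagonal σ * Pᵀ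
  have hSP : Matrix.diagonal σ * Pᵀ = S := by
    subst hS
    ext i j
    simp [Matrix.diagonal_mul, Matrix.transpose_apply, hPdef, mul_ite]
  -- A * A = diagonal l
  have hAA : A * A = Matrix.diagonal l := by
    rw [hAdef, Matrix.diagonal_mul_diagonal]
    exact congrArg Matrix.diagonal (funext fun i => Real.mul_self_sqrt (hl i))
  have hAt : Aᵀ = A := Matrix.diagonal_transpose _
  apply admisSet_mono
  -- E identity
  · rw [hSsqEq, Matrix.transpose_smul, collapse]
    have hVS : V * (Sᵀ * Uᵀ) = A * Hᵀ := by
      have h := congrArg Matrix.transpose hSVD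
      simp only [Matrix.transpose_mul, Matrix.transpose_transpose, hAt, Matrix.mul_assoc] at h
      exact h.symm
    have hDD : Matrix.diagonal σ * Matrix.diagonal σ = S * Sᵀ := by
      rw [hSS, Matrix.diagonal_mul_diagonal]
    calc U * Matrix.diagonal σ * (U * Matrix.diagonal σ)ᵀ
        = U * Matrix.diagonal σ * Matrix.diagonal σ * Uᵀ := by
          rw [Matrix.transpose_mul, Matrix.diagonal_transpose, ← Matrix.mul_assoc]
      _ = U * (S * Sᵀ) * Uᵀ := by rw [Matrix.mul_assoc U, hDD]
      _ = U * S * (Vᵀ * V) * Sᵀ * Uᵀ := by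
          rw [hV, Matrix.mul_one]; simp only [Matrix.mul_assoc]
      _ = H * A * (V * (Sᵀ * Uᵀ)) := by simp only [Matrix.mul_assoc, hSVD]
      _ = H * Matrix.diagonal l * Hᵀ := by
          rw [hVS, Matrix.mul_assoc H, ← Matrix.mul_assoc A A, hAA, ← Matrix.mul_assoc,
            Matrix.mul_assoc]
  -- F identity
  · rw [hSsqEq, Matrix.transpose_smul, collapse]
    simp only [Matrix.transpose_mul, hAt]
    simp only [← Matrix.mul_assoc]
    rw [Matrix.mul_assoc U, hSP, ← hSVD, Matrix.mul_assoc H A A, hAA]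
  -- trace identity
  · rw [Matrix.trace_smul, Matrix.trace_one]
    simp only [Fintype.card_fin, smul_eq_mul, ← hcdef, ← htdef]
    field_simp
  -- PSD of the remainder
  · rw [Matrix.transpose_smul, collapse]
    have hXl : Xd * Matrix.diagonal l * Xdᵀ = (Xd * A * V) * (Xd * A * V)ᵀ := by
      simp only [Matrix.transpose_mul, hAt, Matrix.mul_assoc]
      rw [show V * (Vᵀ * (A * Xdᵀ)) = A * Xdᵀ from by rw [← Matrix.mul_assoc, hV', Matrix.one_mul],
        ← Matrix.mul_assoc A A, hAA]
    have h2nd : (Xd * A * V * P) * (Xd * A * V * P)ᵀ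
        = (Xd * A * V) * (P * Pᵀ) * (Xd * A * V)ᵀ := by
      simp only [Matrix.transpose_mul, Matrix.mul_assoc]
    rw [hXl, h2nd,
      show (Xd * A * V) * (Xd * A * V)ᵀ - (Xd * A * V) * (P * Pᵀ) * (Xd * A * V)ᵀ
          = (Xd * A * V) * ((1 : Matrix (Fin n) (Fin n) ℝ) - P * Pᵀ) * (Xd * A * V)ᵀ from by
        rw [Matrix.mul_sub, Matrix.sub_mul, Matrix.mul_one]]
    have hPP : (1 : Matrix (Fin n) (Fin n) ℝ) - P * Pᵀ
        = Matrix.diagonal (fun j : Fin n => if (j : ℕ) < n_x + n_u then (0 : ℝ) else 1) := by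
      ext i j
      simp only [Matrix.sub_apply, Matrix.one_apply, Matrix.mul_apply, Matrix.transpose_apply,
        hPdef, Matrix.of_apply]
      by_cases hi : (i : ℕ) < n_x + n_u
      · rw [Finset.sum_eq_single (⟨(i : ℕ), hi⟩ : Fin (n_x + n_u))]
        · by_cases hij : i = j
          · subst hij; simp [Matrix.diagonal_apply, hi]
          · have : (j : ℕ) ≠ (i : ℕ) := fun h => hij (Fin.ext h.symm)
            rw [Matrix.diagonal_apply_ne _ hij]
            simp [hij, this]
        · intro b _ hb
          have : (i : ℕ) ≠ (b : ℕ) := by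
            intro h
            apply hb; apply Fin.ext; simp [← h]
          simp [this]
        · simp
      · rw [Finset.sum_eq_zero]
        · by_cases hij : i = j
          · subst hij; simp [Matrix.diagonal_apply, hi]
          · rw [Matrix.diagonal_apply_ne _ hij]
            simp [hij]
        · intro k _
          have : (i : ℕ) ≠ (k : ℕ) := by
            have := k.2; omega
          simp [this]
    rw [hPP]
    have hpsd : (Matrix.diagonal
        (fun j : Fin n => if (j : ℕ) < n_x + n_u then (0 : ℝ) else 1)).PosSemidef := by
      refine Matrix.posSemidef_diagonal_iff.mpr fun j => ?_
      split <;> norm_num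
    have := hpsd.mul_mul_conjTranspose_same (Xd * A * V)
    rwa [Matrix.conjTranspose_eq_transpose_of_trivial] at this
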